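/- If n is a perfect number, then v(n) > 0. -/

import Mathlib

/-- `v n = ∑_{d ∣ n, d > 1} (1/d) · log ((τ(n) - 1) / d)`. -/
noncomputable def v (n : ℕ) : ℝ :=
  ∑ d ∈ n.divisors.filter (fun d => 1 < d),
    (1 / (d : ℝ)) * Real.log (((n.divisors.card : ℝ) - 1) / (d : ℝ))

theorem v_pos_of_perfect (n : ℕ) (hn : 0 < n)
    (hperfect : ∑ d ∈ n.divisors, d = 2 * n) :
    v n > 0 := by
  classical
  have hn1 : 1 < n := by
    by_contra h
    push_neg at h
    interval_cases n
    · simp at hperfect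
  have hnp : ¬ n.Prime := by
    intro hp
    rw [hp.divisors, Finset.sum_pair (by have := hp.two_le; omega : (1:ℕ) ≠ n)] at hperfect
    have := hp.two_le
    omega
  obtain ⟨m, hmdvd, hm2, hmn⟩ := Nat.exists_dvd_of_not_prime2 hn1 hnp
  set s := n.divisors.filter (fun d => 1 < d) with hs
  have h1div : 1 ∈ n.divisors := Nat.one_mem_divisors.mpr hn.ne'
  have hms : m ∈ s := by
    simp [hs, Nat.mem_divisors, hmdvd, hn.ne']; omega
  have hns : n ∈ s := by
    simp [hs, Nat.mem_divisors, hn.ne']; omega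
  have hse : s = n.divisors.erase 1 := by
    ext d
    simp only [hs, Finset.mem_filter, Finset.mem_erase]
    constructor
    · rintro ⟨hd, hd1⟩; exact ⟨by omega, hd⟩
    · rintro ⟨hd1, hd⟩
      refine ⟨hd, ?_⟩
      have := Nat.pos_of_mem_divisors hd
      omega
  have hcard : s.card = n.divisors.card - 1 := by
    rw [hse, Finset.card_erase_of_mem h1div]
  have hcard1 : 1 ≤ n.divisors.card := Finset.card_pos.mpr ⟨1, h1div⟩
  set T : ℝ := (n.divisors.card : ℝ) - 1 with hTdef
  have hT : (s.card : ℝ) = T := by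
    rw [hcard, hTdef, Nat.cast_sub hcard1, Nat.cast_one]
  have hcard2 : 2 ≤ s.card := by
    have : ({m, n} : Finset ℕ) ⊆ s := by
      intro x hx
      simp at hx
      rcases hx with rfl | rfl
      · exact hms
      · exact hns
    calc 2 = ({m, n} : Finset ℕ).card := by
            rw [Finset.card_insert_of_notMem (by simp; omega), Finset.card_singleton]
      _ ≤ s.card := Finset.card_le_card this
  have hTpos : (0:ℝ) < T := by
    rw [← hT]
    exact_mod_cast Nat.lt_of_lt_of_le (by norm_num) hcard2
  have hTne : T ≠ 0 := ne_of_gt hTpos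
  -- sum of reciprocals of all divisors is 2
  have hsum2 : ∑ d ∈ n.divisors, 1/(d:ℝ) = 2 := by
    rw [← Nat.sum_div_divisors n (fun d => 1/(d:ℝ))]
    have : ∀ d ∈ n.divisors, 1/((n/d : ℕ):ℝ) = (d:ℝ)/(n:ℝ) := by
      intro d hd
      rw [Nat.mem_divisors] at hd
      rw [Nat.cast_div hd.1 (by exact_mod_cast (Nat.pos_of_dvd_of_pos hd.1 hn).ne')]
      rw [one_div_div]
    rw [Finset.sum_congr rfl this, ← Finset.sum_div]
    have : ∑ d ∈ n.divisors, (d:ℝ) = 2 * n := by rw [← Nat.cast_sum, hperfect]; push_cast; ring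
    rw [this]
    field_simp
  have hsum1 : ∑ d ∈ s, 1/(d:ℝ) = 1 := by
    have := Finset.add_sum_erase n.divisors (fun d => 1/(d:ℝ)) h1div
    rw [hsum2] at this
    rw [hse]
    simp only [Nat.cast_one] at this
    linarith
  -- lower bound each term
  have hle : ∀ d ∈ s, 1/(d:ℝ) - 1/T ≤ (1/(d:ℝ)) * Real.log (T/(d:ℝ)) := by
    intro d hd
    have hd1 : 1 < d := (Finset.mem_filter.mp hd).2
    have hdpos : (0:ℝ) < d := by exact_mod_cast Nat.lt_of_lt_of_le Nat.zero_lt_one hd1.le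
    have hlog : Real.log ((d:ℝ)/T) ≤ (d:ℝ)/T - 1 :=
      Real.log_le_sub_one_of_pos (by positivity)
    have hlog2 : 1 - (d:ℝ)/T ≤ Real.log (T/(d:ℝ)) := by
      have : Real.log (T/(d:ℝ)) = - Real.log ((d:ℝ)/T) := by
        rw [← Real.log_inv, inv_div]
      rw [this]; linarith
    have := mul_le_mul_of_nonneg_left hlog2 (by positivity : (0:ℝ) ≤ 1/(d:ℝ))
    calc 1/(d:ℝ) - 1/T = (1/(d:ℝ)) * (1 - (d:ℝ)/T) := by
          field_simp
      _ ≤ (1/(d:ℝ)) * Real.log (T/(d:ℝ)) := this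
  -- strict for some d
  have hlt : ∃ d ∈ s, 1/(d:ℝ) - 1/T < (1/(d:ℝ)) * Real.log (T/(d:ℝ)) := by
    have hkey : ∀ d ∈ s, (d:ℝ) ≠ T → 1/(d:ℝ) - 1/T < (1/(d:ℝ)) * Real.log (T/(d:ℝ)) := by
      intro d hd hne
      have hd1 : 1 < d := (Finset.mem_filter.mp hd).2
      have hdpos : (0:ℝ) < d := by exact_mod_cast Nat.lt_of_lt_of_le Nat.zero_lt_one hd1.le
      have hlog : Real.log ((d:ℝ)/T) < (d:ℝ)/T - 1 := by
        apply Real.log_lt_sub_one_of_pos (by positivity)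
        intro h
        apply hne
        field_simp at h
        linarith
      have hlog2 : 1 - (d:ℝ)/T < Real.log (T/(d:ℝ)) := by
        have : Real.log (T/(d:ℝ)) = - Real.log ((d:ℝ)/T) := by
          rw [← Real.log_inv, inv_div]
        rw [this]; linarith
      have := mul_lt_mul_of_pos_left hlog2 (by positivity : (0:ℝ) < 1/(d:ℝ))
      calc 1/(d:ℝ) - 1/T = (1/(d:ℝ)) * (1 - (d:ℝ)/T) := by field_simp
        _ < (1/(d:ℝ)) * Real.log (T/(d:ℝ)) := this
    by_cases hmT : (m:ℝ) = T
    · refine ⟨n, hns, hkey n hns ?_⟩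
      rw [← hmT]
      exact_mod_cast (by omega : n ≠ m)
    · exact ⟨m, hms, hkey m hms hmT⟩
  have hmain : ∑ d ∈ s, (1/(d:ℝ) - 1/T) < ∑ d ∈ s, (1/(d:ℝ)) * Real.log (T/(d:ℝ)) :=
    Finset.sum_lt_sum hle hlt
  have hzero : ∑ d ∈ s, (1/(d:ℝ) - 1/T) = 0 := by
    rw [Finset.sum_sub_distrib, hsum1, Finset.sum_const, nsmul_eq_mul, hT]
    field_simp
    ring
  rw [v]
  rw [← hs]
  calc (0:ℝ) = ∑ d ∈ s, (1/(d:ℝ) - 1/T) := hzero.symm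
    _ < ∑ d ∈ s, (1/(d:ℝ)) * Real.log (T/(d:ℝ)) := hmain
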